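/- arXiv:1608.06160 — 2 statements merged into one kernel-verified Lean document; each statement's English description precedes it below -/
import Mathlib

section
/- For every real ε > 0 there exists a constant C = C(ε) such that for all integers q and K with 1 ≤ K ≤ q, the number R₂(q;K) of solutions (x₁, x₂, x₃, x₄) with 1 ≤ x_i ≤ K of the congruence x₁ x₂ ≡ x₃ x₄ (mod q) satisfies R₂(q;K) ≤ C (K⁴ q^{-1} + K²) q^ε. -/
open Finset Real

theorem divisor_bound (δ : ℝ) (hδ : 0 < δ) :
    ∃ C : ℝ, 1 ≤ C ∧ ∀ n : ℕ, n ≠ 0 → (n.divisors.card : ℝ) ≤ C * (n : ℝ) ^ δ := by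
  have hL : 0 < Real.log 2 := Real.log_pos (by norm_num)
  set M : ℝ := 1 + 1 / (δ * Real.log 2) with hM
  have hM1 : 1 ≤ M := le_add_of_nonneg_right (by positivity)
  set T : ℕ := ⌈(2 : ℝ) ^ (1 / δ)⌉₊ with hT
  refine ⟨M ^ (T + 1), one_le_pow₀ hM1, fun n hn => ?_⟩
  -- per-prime bound
  have key : ∀ p ∈ n.primeFactors,
      ((n.factorization p + 1 : ℕ) : ℝ) ≤
        (if p ≤ T then M else 1) * ((p : ℝ) ^ (n.factorization p)) ^ δ := by
    intro p hp
    have hpp : p.Prime := Nat.prime_of_mem_primeFactors hp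
    set a : ℕ := n.factorization p
    have hp2 : (2 : ℝ) ≤ (p : ℝ) := by exact_mod_cast hpp.two_le
    have hppos : (0 : ℝ) < (p : ℝ) := by linarith
    have hrw : ((p : ℝ) ^ a) ^ δ = (p : ℝ) ^ ((a : ℝ) * δ) := by
      rw [← Real.rpow_natCast (p : ℝ) a, ← Real.rpow_mul hppos.le]
    rw [hrw]
    by_cases hpT : p ≤ T
    · simp only [hpT, if_true]
      have h1 : (2 : ℝ) ^ ((a : ℝ) * δ) ≤ (p : ℝ) ^ ((a : ℝ) * δ) :=
        Real.rpow_le_rpow (by norm_num) hp2 (by positivity)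
      have h2 : (a : ℝ) * δ * Real.log 2 + 1 ≤ (2 : ℝ) ^ ((a : ℝ) * δ) := by
        rw [Real.rpow_def_of_pos (by norm_num : (0:ℝ) < 2)]
        calc (a : ℝ) * δ * Real.log 2 + 1 ≤ Real.exp ((a:ℝ) * δ * Real.log 2) :=
              Real.add_one_le_exp _
          _ = Real.exp (Real.log 2 * ((a:ℝ) * δ)) := by ring_nf
      have ha0 : (0 : ℝ) ≤ (a : ℝ) := Nat.cast_nonneg a
      have : ((a + 1 : ℕ) : ℝ) ≤ M * ((a : ℝ) * δ * Real.log 2 + 1) := by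
        push_cast
        rw [hM]
        have hd : 1 / (δ * Real.log 2) * (δ * Real.log 2) = 1 := by
          field_simp
        nlinarith [mul_pos hδ hL, mul_nonneg (mul_nonneg ha0 hδ.le) hL.le]
      calc ((a + 1 : ℕ) : ℝ) ≤ M * ((a : ℝ) * δ * Real.log 2 + 1) := this
        _ ≤ M * (2 : ℝ) ^ ((a : ℝ) * δ) := by
            apply mul_le_mul_of_nonneg_left h2 (by linarith)
        _ ≤ M * (p : ℝ) ^ ((a : ℝ) * δ) := mul_le_mul_of_nonneg_left h1 (by linarith)
    · simp only [hpT, if_false, one_mul]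
      -- p > T, so p ≥ 2^(1/δ), so p^δ ≥ 2
      have hpT' : (2 : ℝ) ^ (1 / δ) ≤ (p : ℝ) := by
        calc (2 : ℝ) ^ (1 / δ) ≤ (T : ℕ) := Nat.le_ceil _
          _ ≤ (p : ℝ) := by exact_mod_cast (Nat.lt_of_not_le hpT).le
      have h2 : (2 : ℝ) ≤ (p : ℝ) ^ δ := by
        calc (2 : ℝ) = ((2 : ℝ) ^ (1 / δ)) ^ δ := by
              rw [← Real.rpow_mul (by norm_num : (0:ℝ) ≤ 2), one_div_mul_cancel hδ.ne',
                Real.rpow_one]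
          _ ≤ (p : ℝ) ^ δ := Real.rpow_le_rpow (by positivity) hpT' hδ.le
      have hrw2 : (p : ℝ) ^ ((a : ℝ) * δ) = ((p : ℝ) ^ δ) ^ a := by
        rw [mul_comm, Real.rpow_mul hppos.le, Real.rpow_natCast]
      rw [hrw2]
      calc ((a + 1 : ℕ) : ℝ) ≤ (2 : ℝ) ^ a := by
            exact_mod_cast Nat.succ_le_of_lt (Nat.lt_two_pow_self (n := a))
        _ ≤ ((p : ℝ) ^ δ) ^ a := pow_le_pow_left₀ (by norm_num) h2 a
  have hprod_n : ∏ p ∈ n.primeFactors, (p : ℝ) ^ (n.factorization p) = (n : ℝ) := by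
    conv_rhs => rw [← Nat.factorization_prod_pow_eq_self hn]
    rw [Finsupp.prod, Nat.support_factorization]
    push_cast
    rfl
  have hsmall : ∏ p ∈ n.primeFactors, (if p ≤ T then M else 1) ≤ M ^ (T + 1) := by
    rw [Finset.prod_ite, Finset.prod_const, Finset.prod_const, one_pow, mul_one]
    apply pow_le_pow_right₀ hM1
    calc (n.primeFactors.filter (· ≤ T)).card ≤ (Finset.range (T + 1)).card :=
          Finset.card_le_card (fun p hp => Finset.mem_range.2
            (Nat.lt_succ_of_le (Finset.mem_filter.1 hp).2))
      _ = T + 1 := Finset.card_range _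
  calc (n.divisors.card : ℝ)
      = ∏ p ∈ n.primeFactors, ((n.factorization p + 1 : ℕ) : ℝ) := by
        rw [Nat.card_divisors hn]; push_cast; rfl
    _ ≤ ∏ p ∈ n.primeFactors, (if p ≤ T then M else 1) *
          ((p : ℝ) ^ (n.factorization p)) ^ δ :=
        Finset.prod_le_prod (fun p _ => by positivity) key
    _ = (∏ p ∈ n.primeFactors, (if p ≤ T then M else 1)) *
          ∏ p ∈ n.primeFactors, ((p : ℝ) ^ (n.factorization p)) ^ δ :=
        Finset.prod_mul_distrib
    _ ≤ M ^ (T + 1) * (n : ℝ) ^ δ := by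
        rw [Real.finset_prod_rpow _ _ (fun p _ => by positivity) δ, hprod_n]
        exact mul_le_mul_of_nonneg_right hsmall (by positivity)

/-- Lemma (Friedlander–Iwaniec): for every `ε > 0` there is a constant `C` such that for all
`1 ≤ K ≤ q`, the number `R₂(q;K)` of quadruples `(x₁,x₂,x₃,x₄)` with `1 ≤ xᵢ ≤ K` and
`x₁ x₂ ≡ x₃ x₄ (mod q)` satisfies `R₂(q;K) ≤ C (K⁴ q^{-1} + K²) q^ε`. -/
theorem product_congruence_count_bound (ε : ℝ) (hε : 0 < ε) :
    ∃ C : ℝ, ∀ q K : ℕ, 1 ≤ K → K ≤ q →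
      (Set.ncard {x : ℕ × ℕ × ℕ × ℕ |
          (1 ≤ x.1 ∧ x.1 ≤ K) ∧ (1 ≤ x.2.1 ∧ x.2.1 ≤ K) ∧
          (1 ≤ x.2.2.1 ∧ x.2.2.1 ≤ K) ∧ (1 ≤ x.2.2.2 ∧ x.2.2.2 ≤ K) ∧
          ((x.1 * x.2.1 : ℕ) : ZMod q) = ((x.2.2.1 * x.2.2.2 : ℕ) : ZMod q)} : ℝ) ≤
        C * ((K : ℝ) ^ 4 * (q : ℝ)⁻¹ + (K : ℝ) ^ 2) * (q : ℝ) ^ ε := by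
  obtain ⟨C, hC1, hC⟩ := divisor_bound (ε / 2) (by positivity)
  refine ⟨C, fun q K hK1 hKq => ?_⟩
  have hq1 : 1 ≤ q := hK1.trans hKq
  have hq0 : (0 : ℝ) < (q : ℝ) := by exact_mod_cast hq1
  set F : Finset (ℕ × ℕ × ℕ × ℕ) :=
    (Finset.Icc 1 K ×ˢ Finset.Icc 1 K ×ˢ Finset.Icc 1 K ×ˢ Finset.Icc 1 K).filter
      (fun x => ((x.1 * x.2.1 : ℕ) : ZMod q) = ((x.2.2.1 * x.2.2.2 : ℕ) : ZMod q)) with hF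
  have hset : {x : ℕ × ℕ × ℕ × ℕ |
          (1 ≤ x.1 ∧ x.1 ≤ K) ∧ (1 ≤ x.2.1 ∧ x.2.1 ≤ K) ∧
          (1 ≤ x.2.2.1 ∧ x.2.2.1 ≤ K) ∧ (1 ≤ x.2.2.2 ∧ x.2.2.2 ≤ K) ∧
          ((x.1 * x.2.1 : ℕ) : ZMod q) = ((x.2.2.1 * x.2.2.2 : ℕ) : ZMod q)} = ↑F := by
    ext x
    simp only [hF, Set.mem_setOf_eq, Finset.coe_filter, Finset.mem_product, Finset.mem_Icc]
    tauto
  rw [hset, Set.ncard_coe_finset]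
  set f : ℕ × ℕ × ℕ × ℕ → ℕ × ℕ × ℕ := fun x => (x.1, x.2.1, x.2.2.1 * x.2.2.2) with hf
  set N : ℕ := ⌊C * (q : ℝ) ^ ε⌋₊ with hN
  -- fiber bound
  have hfib : ∀ b ∈ F.image f, (F.filter (fun x => f x = b)).card ≤ N := by
    rintro ⟨y1, y2, m⟩ hb
    obtain ⟨x, hxF, hxe⟩ := Finset.mem_image.1 hb
    simp only [hF, Finset.mem_filter, Finset.mem_product, Finset.mem_Icc] at hxF
    obtain ⟨⟨h1, h2, h3, h4⟩, hcg⟩ := hxF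
    have hme : x.2.2.1 * x.2.2.2 = m := congrArg (fun z => z.2.2) hxe
    have hm0 : m ≠ 0 := by
      rw [← hme]; exact Nat.mul_ne_zero (by omega) (by omega)
    have hmK : m ≤ K ^ 2 := by
      rw [← hme, sq]; exact Nat.mul_le_mul h3.2 h4.2
    have hdm : m.divisors.card ≤ N := by
      rw [hN]
      apply Nat.le_floor
      calc (m.divisors.card : ℝ) ≤ C * (m : ℝ) ^ (ε / 2) := hC m hm0
        _ ≤ C * (q : ℝ) ^ ε := by
            apply mul_le_mul_of_nonneg_left _ (by linarith)
            calc (m : ℝ) ^ (ε / 2) ≤ ((q : ℝ) ^ (2 : ℕ)) ^ (ε / 2) := by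
                  apply Real.rpow_le_rpow (Nat.cast_nonneg m) _ (by positivity)
                  have : (m : ℝ) ≤ ((q ^ 2 : ℕ) : ℝ) := by
                    exact_mod_cast hmK.trans (Nat.pow_le_pow_left hKq 2)
                  simpa using this
              _ = (q : ℝ) ^ ε := by
                  rw [← Real.rpow_natCast (q : ℝ) 2, ← Real.rpow_mul hq0.le]
                  congr 1; ring
    refine le_trans (Finset.card_le_card_of_injOn (fun z => z.2.2.1) ?_ ?_) hdm
    · intro z hz
      simp only [Finset.mem_coe, Finset.mem_filter] at hz
      obtain ⟨hzF, hze⟩ := hz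
      simp only [hF, Finset.mem_filter, Finset.mem_product, Finset.mem_Icc] at hzF
      have hzm : z.2.2.1 * z.2.2.2 = m := congrArg (fun w => w.2.2) hze
      exact Nat.mem_divisors.2 ⟨⟨z.2.2.2, hzm.symm⟩, hm0⟩
    · rintro z hz w hw hzw
      have hzw' : z.2.2.1 = w.2.2.1 := hzw
      simp only [Finset.coe_filter, Set.mem_setOf_eq] at hz hw
      obtain ⟨hzF, hze⟩ := hz
      obtain ⟨hwF, hwe⟩ := hw
      have hz1 : z.1 = y1 := congrArg (fun w => w.1) hze
      have hz2 : z.2.1 = y2 := congrArg (fun w => w.2.1) hze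
      have hz3 : z.2.2.1 * z.2.2.2 = m := congrArg (fun w => w.2.2) hze
      have hw1 : w.1 = y1 := congrArg (fun w => w.1) hwe
      have hw2 : w.2.1 = y2 := congrArg (fun w => w.2.1) hwe
      have hw3 : w.2.2.1 * w.2.2.2 = m := congrArg (fun w => w.2.2) hwe
      have hz30 : z.2.2.1 ≠ 0 := by
        simp only [hF, Finset.mem_filter, Finset.mem_product, Finset.mem_Icc] at hzF
        omega
      have h4 : z.2.2.2 = w.2.2.2 := by
        have : z.2.2.1 * z.2.2.2 = z.2.2.1 * w.2.2.2 := by rw [hz3, ← hw3, hzw']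
        exact Nat.eq_of_mul_eq_mul_left (Nat.pos_of_ne_zero hz30) this
      obtain ⟨za, zb, zc, zd⟩ := z
      obtain ⟨wa, wb, wc, wd⟩ := w
      simp_all
  have hcard1 := Finset.card_le_mul_card_image F N hfib
  -- image bound
  have himg : (F.image f).card ≤ K * K * (K ^ 2 / q + 1) := by
    have := Finset.card_le_card_of_injOn
      (f := fun y : ℕ × ℕ × ℕ => (y.1, y.2.1, (y.2.2 - 1) / q))
      (s := F.image f)
      (t := Finset.Icc 1 K ×ˢ Finset.Icc 1 K ×ˢ Finset.range (K ^ 2 / q + 1)) ?_ ?_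
    · calc (F.image f).card
          ≤ (Finset.Icc 1 K ×ˢ Finset.Icc 1 K ×ˢ Finset.range (K ^ 2 / q + 1)).card := this
        _ = K * K * (K ^ 2 / q + 1) := by
            simp [Finset.card_product, Nat.card_Icc, mul_assoc]
    · rintro ⟨y1, y2, m⟩ hb
      obtain ⟨x, hxF, hxe⟩ := Finset.mem_image.1 hb
      simp only [hF, Finset.mem_filter, Finset.mem_product, Finset.mem_Icc] at hxF
      obtain ⟨⟨h1, h2, h3, h4⟩, hcg⟩ := hxF
      have hx1 : x.1 = y1 := congrArg (fun w => w.1) hxe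
      have hx2 : x.2.1 = y2 := congrArg (fun w => w.2.1) hxe
      have hme : x.2.2.1 * x.2.2.2 = m := congrArg (fun w => w.2.2) hxe
      simp only [Finset.mem_coe, Finset.mem_product, Finset.mem_Icc, Finset.mem_range]
      refine ⟨by omega, by omega, ?_⟩
      have hmK : m ≤ K ^ 2 := by rw [← hme, sq]; exact Nat.mul_le_mul h3.2 h4.2
      have : (m - 1) / q ≤ K ^ 2 / q := Nat.div_le_div_right (by omega)
      omega
    · rintro ⟨a1, a2, m⟩ ha ⟨b1, b2, m'⟩ hb heq
      simp only [Finset.coe_image, Set.mem_image, Finset.mem_coe] at ha hb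
      obtain ⟨x, hxF, hxe⟩ := ha
      obtain ⟨z, hzF, hze⟩ := hb
      simp only [hF, Finset.mem_filter, Finset.mem_product, Finset.mem_Icc] at hxF hzF
      have he1 : a1 = b1 := congrArg (fun w => w.1) heq
      have he2 : a2 = b2 := congrArg (fun w => w.2.1) heq
      have he3 : (m - 1) / q = (m' - 1) / q := congrArg (fun w => w.2.2) heq
      have hx1 : x.1 = a1 := congrArg (fun w => w.1) hxe
      have hx2 : x.2.1 = a2 := congrArg (fun w => w.2.1) hxe
      have hxm : x.2.2.1 * x.2.2.2 = m := congrArg (fun w => w.2.2) hxe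
      have hz1 : z.1 = b1 := congrArg (fun w => w.1) hze
      have hz2 : z.2.1 = b2 := congrArg (fun w => w.2.1) hze
      have hzm : z.2.2.1 * z.2.2.2 = m' := congrArg (fun w => w.2.2) hze
      obtain ⟨⟨hxa, hxb, hxc, hxd⟩, hxcong⟩ := hxF
      obtain ⟨⟨hza, hzb, hzc, hzd⟩, hzcong⟩ := hzF
      have hm1 : 1 ≤ m := by
        rw [← hxm]
        exact Nat.one_le_iff_ne_zero.2 (Nat.mul_ne_zero (by omega) (by omega))
      have hm'1 : 1 ≤ m' := by
        rw [← hzm]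
        exact Nat.one_le_iff_ne_zero.2 (Nat.mul_ne_zero (by omega) (by omega))
      have hcgx : ((a1 * a2 : ℕ) : ZMod q) = ((m : ℕ) : ZMod q) := by
        rw [← hx1, ← hx2, ← hxm]; exact hxcong
      have hcgz : ((a1 * a2 : ℕ) : ZMod q) = ((m' : ℕ) : ZMod q) := by
        rw [he1, he2, ← hz1, ← hz2, ← hzm]; exact hzcong
      have hmm : m ≡ m' [MOD q] :=
        (ZMod.natCast_eq_natCast_iff m m' q).1 (hcgx.symm.trans hcgz)
      have hsub : (m - 1) % q = (m' - 1) % q := by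
        have : m - 1 + 1 ≡ m' - 1 + 1 [MOD q] := by
          rwa [Nat.sub_add_cancel hm1, Nat.sub_add_cancel hm'1]
        exact Nat.ModEq.add_right_cancel' 1 this
      have hmeq : m = m' := by
        have e1 := Nat.div_add_mod (m - 1) q
        have e2 := Nat.div_add_mod (m' - 1) q
        rw [he3, hsub] at e1
        omega
      rw [he1, he2, hmeq]
  -- combine
  have hcard : F.card ≤ N * (K * K * (K ^ 2 / q + 1)) :=
    hcard1.trans (Nat.mul_le_mul_left N himg)
  have hNle : (N : ℝ) ≤ C * (q : ℝ) ^ ε := Nat.floor_le (by positivity)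
  have hdivle : ((K ^ 2 / q : ℕ) : ℝ) ≤ (K : ℝ) ^ 2 / (q : ℝ) := by
    calc ((K ^ 2 / q : ℕ) : ℝ) ≤ ((K ^ 2 : ℕ) : ℝ) / (q : ℝ) := Nat.cast_div_le
      _ = (K : ℝ) ^ 2 / (q : ℝ) := by push_cast; ring
  have hK0 : (0 : ℝ) ≤ (K : ℝ) := Nat.cast_nonneg K
  calc (F.card : ℝ) ≤ ((N * (K * K * (K ^ 2 / q + 1)) : ℕ) : ℝ) := by exact_mod_cast hcard
    _ = (N : ℝ) * ((K : ℝ) * (K : ℝ) * (((K ^ 2 / q : ℕ) : ℝ) + 1)) := by push_cast; ring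
    _ ≤ (C * (q : ℝ) ^ ε) * ((K : ℝ) * (K : ℝ) * ((K : ℝ) ^ 2 / (q : ℝ) + 1)) := by
        apply mul_le_mul hNle _ (by positivity) (by positivity)
        apply mul_le_mul_of_nonneg_left _ (by positivity)
        linarith
    _ = C * ((K : ℝ) ^ 4 * (q : ℝ)⁻¹ + (K : ℝ) ^ 2) * (q : ℝ) ^ ε := by
        field_simp
end

section
/- Fix a positive integer r. For every real ε > 0 there exists a constant C = C(r, ε) such that for all sufficiently large integers K and Q with 1 ≤ K ≤ Q, (1/Q) · Σ_{Q ≤ q ≤ 2Q} R_r(q;K) ≤ C (K^{2r} Q^{-1} + K^r) Q^ε, where the sum is over integers q in [Q, 2Q]. -/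
open Finset

/-- `R_r(q;K)`: the number of `2r`-tuples `(x₁, …, x_{2r})` of integers with
`1 ≤ x₁, …, x_{2r} ≤ K` satisfying `x₁ ⋯ x_r ≡ x_{r+1} ⋯ x_{2r} (mod q)`. The tuple is
encoded as a pair of `r`-tuples. -/
noncomputable def productCongCount (r q K : ℕ) : ℕ :=
  Set.ncard {p : (Fin r → ℕ) × (Fin r → ℕ) |
    (∀ i, 1 ≤ p.1 i ∧ p.1 i ≤ K) ∧ (∀ i, 1 ≤ p.2 i ∧ p.2 i ≤ K) ∧
    ((∏ i, p.1 i : ℕ) : ZMod q) = ((∏ i, p.2 i : ℕ) : ZMod q)}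

private lemma pow_rpow_comm {x : ℝ} (hx : 0 ≤ x) (k : ℕ) (δ : ℝ) :
    (x ^ k) ^ δ = (x ^ δ) ^ k := by
  rw [← Real.rpow_natCast x k, ← Real.rpow_mul hx, mul_comm, Real.rpow_mul hx,
    Real.rpow_natCast]

private lemma card_divisors_le_rpow {δ : ℝ} (hδ : 0 < δ) :
    ∃ C : ℝ, 1 ≤ C ∧ ∀ n : ℕ, n ≠ 0 → (n.divisors.card : ℝ) ≤ C * (n : ℝ) ^ δ := by
  set t : ℝ := (2 : ℝ) ^ δ with htdef
  have ht : 1 < t := (Real.one_lt_rpow_iff_of_pos (by norm_num)).mpr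
    (Or.inl ⟨by norm_num, hδ⟩)
  set B : ℝ := max 1 (t - 1)⁻¹ with hBdef
  have hB1 : (1 : ℝ) ≤ B := le_max_left _ _
  have hB0 : (0 : ℝ) ≤ B := by linarith
  have ht1 : 0 < t - 1 := by linarith
  have hBt : 1 ≤ B * (t - 1) := by
    have h2 : (t - 1)⁻¹ ≤ B := le_max_right _ _
    have h3 := mul_le_mul_of_nonneg_right h2 ht1.le
    rwa [inv_mul_cancel₀ ht1.ne'] at h3
  have key : ∀ k : ℕ, (k + 1 : ℝ) ≤ B * t ^ k := by
    intro k
    have h1 : 1 + (k : ℝ) * (t - 1) ≤ t ^ k := by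
      have h := one_add_mul_le_pow (a := t - 1) (by linarith) k
      have e : 1 + (t - 1) = t := by ring
      rwa [e] at h
    have h2 : B * (1 + (k : ℝ) * (t - 1)) ≤ B * t ^ k :=
      mul_le_mul_of_nonneg_left h1 hB0
    nlinarith [Nat.cast_nonneg (α := ℝ) k]
  obtain ⟨m, hm⟩ : ∃ m : ℕ, 1 ≤ (m : ℝ) * δ := by
    refine ⟨⌈1 / δ⌉₊, ?_⟩
    have h := Nat.le_ceil (1 / δ)
    calc (1 : ℝ) = (1 / δ) * δ := by field_simp
    _ ≤ (⌈1 / δ⌉₊ : ℝ) * δ := by gcongr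
  set P := 2 ^ m with hPdef
  refine ⟨B ^ P, one_le_pow₀ hB1, ?_⟩
  intro n hn
  have hfac : ∀ p ∈ n.primeFactors, ((n.factorization p : ℝ) + 1) ≤
      (if p < P then B else 1) * ((p : ℝ) ^ δ) ^ (n.factorization p) := by
    intro p hp
    have hp2 : 2 ≤ p := (Nat.prime_of_mem_primeFactors hp).two_le
    have hpδ : t ≤ (p : ℝ) ^ δ :=
      Real.rpow_le_rpow (by norm_num) (by exact_mod_cast hp2) hδ.le
    set k := n.factorization p with hk
    by_cases hlt : p < P
    · rw [if_pos hlt]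
      calc ((k : ℝ) + 1) ≤ B * t ^ k := key k
      _ ≤ B * ((p : ℝ) ^ δ) ^ k :=
          mul_le_mul_of_nonneg_left (pow_le_pow_left₀ (by positivity) hpδ k) hB0
    · rw [if_neg hlt, one_mul]
      push_neg at hlt
      have h2p : (2 : ℝ) ≤ (p : ℝ) ^ δ := by
        have h2 : ((P : ℕ) : ℝ) ^ δ ≤ (p : ℝ) ^ δ :=
          Real.rpow_le_rpow (by positivity) (by exact_mod_cast hlt) hδ.le
        have h3 : ((P : ℕ) : ℝ) ^ δ = (2 : ℝ) ^ ((m : ℝ) * δ) := by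
          rw [hPdef]
          push_cast
          rw [← Real.rpow_natCast 2 m, ← Real.rpow_mul (by norm_num)]
        have h4 : (2 : ℝ) ^ (1 : ℝ) ≤ (2 : ℝ) ^ ((m : ℝ) * δ) :=
          Real.rpow_le_rpow_of_exponent_le (by norm_num) hm
        rw [Real.rpow_one] at h4
        rw [h3] at h2
        linarith
      have hkk : (k + 1 : ℕ) ≤ 2 ^ k := Nat.lt_two_pow_self (n := k)
      calc ((k : ℝ) + 1) ≤ (2 : ℝ) ^ k := by exact_mod_cast hkk
      _ ≤ ((p : ℝ) ^ δ) ^ k := pow_le_pow_left₀ (by norm_num) h2p k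
  have hprod : (n.divisors.card : ℝ) =
      ∏ p ∈ n.primeFactors, ((n.factorization p : ℝ) + 1) := by
    rw [Nat.card_divisors hn]
    push_cast
    rfl
  have hnδ : (n : ℝ) ^ δ = ∏ p ∈ n.primeFactors, ((p : ℝ) ^ δ) ^ (n.factorization p) := by
    conv_lhs => rw [← Nat.factorization_prod_pow_eq_self hn]
    rw [Finsupp.prod, Nat.support_factorization]
    push_cast
    rw [← Real.finset_prod_rpow _ _ (fun p _ => by positivity) δ]
    exact Finset.prod_congr rfl fun p _ => pow_rpow_comm (by positivity) _ δ
  rw [hprod, hnδ]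
  calc ∏ p ∈ n.primeFactors, ((n.factorization p : ℝ) + 1)
      ≤ ∏ p ∈ n.primeFactors,
        ((if p < P then B else 1) * ((p : ℝ) ^ δ) ^ (n.factorization p)) :=
        Finset.prod_le_prod (fun p _ => by positivity) hfac
  _ = (∏ p ∈ n.primeFactors, (if p < P then B else 1)) *
        ∏ p ∈ n.primeFactors, ((p : ℝ) ^ δ) ^ (n.factorization p) :=
        Finset.prod_mul_distrib
  _ ≤ B ^ P * ∏ p ∈ n.primeFactors, ((p : ℝ) ^ δ) ^ (n.factorization p) := by
      apply mul_le_mul_of_nonneg_right _ (Finset.prod_nonneg fun p _ => by positivity)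
      rw [Finset.prod_ite, Finset.prod_const, Finset.prod_const, one_pow, mul_one]
      apply pow_le_pow_right₀ hB1
      calc (n.primeFactors.filter (· < P)).card ≤ (Finset.range P).card :=
            card_le_card fun p hp => mem_range.mpr (mem_filter.mp hp).2
      _ = P := card_range P

/-- Lemma (average of `R_r(q;K)` over `q ∈ [Q, 2Q]`): fix a positive integer `r`. For every
`ε > 0` there is a constant `C = C(r, ε)` such that for all sufficiently large integers
`1 ≤ K ≤ Q`, `(1/Q) ∑_{Q ≤ q ≤ 2Q} R_r(q;K) ≤ C (K^{2r} Q^{-1} + K^r) Q^ε`. -/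
theorem product_congruence_count_average_bound (r : ℕ) (hr : 1 ≤ r) (ε : ℝ) (hε : 0 < ε) :
    ∃ C : ℝ, ∃ n₀ : ℕ, 1 ≤ n₀ ∧ ∀ K Q : ℕ, n₀ ≤ K → K ≤ Q →
      (1 / (Q : ℝ)) * ∑ q ∈ Finset.Icc Q (2 * Q), (productCongCount r q K : ℝ) ≤
        C * ((K : ℝ) ^ (2 * r) * (Q : ℝ)⁻¹ + (K : ℝ) ^ r) * (Q : ℝ) ^ ε := by
  classical
  have hr0 : (0:ℝ) < r := by exact_mod_cast hr
  set δ : ℝ := ε / (r * r) with hδdef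
  have hδ : 0 < δ := by positivity
  obtain ⟨C₁, hC₁, hdiv⟩ := card_divisors_le_rpow hδ
  have hC₁0 : (0:ℝ) < C₁ := lt_of_lt_of_le one_pos hC₁
  refine ⟨2 * C₁ ^ r, 1, le_refl 1, ?_⟩
  intro K Q hK hKQ
  have hQ1 : 1 ≤ Q := hK.trans hKQ
  have hQ0 : (0:ℝ) < Q := by exact_mod_cast hQ1
  have hK0 : (1:ℝ) ≤ K := by exact_mod_cast hK
  set T : Finset (Fin r → ℕ) := Fintype.piFinset fun _ => Finset.Icc 1 K with hT
  -- rewrite productCongCount as a Finset card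
  have hcount : ∀ q, productCongCount r q K =
      ((T ×ˢ T).filter fun p =>
        ((∏ i, p.1 i : ℕ) : ZMod q) = ((∏ i, p.2 i : ℕ) : ZMod q)).card := by
    intro q
    rw [productCongCount, ← Set.ncard_coe_finset]
    congr 1
    ext p
    simp only [Set.mem_setOf_eq, coe_filter, mem_product, hT, Fintype.mem_piFinset, mem_Icc]
    tauto
  have hTmem : ∀ x ∈ T, 1 ≤ ∏ i, x i ∧ ∏ i, x i ≤ K ^ r := by
    intro x hx
    simp only [hT, Fintype.mem_piFinset, mem_Icc] at hx
    constructor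
    · exact Finset.one_le_prod' fun i _ => (hx i).1
    · calc ∏ i, x i ≤ ∏ _i : Fin r, K := Finset.prod_le_prod' fun i _ => (hx i).2
      _ = K ^ r := by rw [Finset.prod_const, card_univ, Fintype.card_fin]
  have hcardT : T.card = K ^ r := by
    rw [hT, Fintype.card_piFinset]
    simp [Nat.card_Icc]
  -- a useful rpow computation : ((K:ℝ)^r) ^ δ ≤ (Q:ℝ) ^ ε etc.
  have hKQr : (K:ℝ) ≤ (Q:ℝ) := by exact_mod_cast hKQ
  have hKrδ : (((K:ℝ) ^ r) ^ δ) ^ r ≤ (Q:ℝ) ^ ε := by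
    have e1 : (((K:ℝ) ^ r) ^ δ) ^ r = (K:ℝ) ^ ((r : ℝ) * δ * r) := by
      rw [← Real.rpow_natCast (K:ℝ) r, ← Real.rpow_mul (by positivity),
        ← Real.rpow_natCast ((K:ℝ) ^ ((r:ℝ) * δ)) r, ← Real.rpow_mul (by positivity)]
    have e2 : (r : ℝ) * δ * r = ε := by
      rw [hδdef]; field_simp
    rw [e1, e2]
    exact Real.rpow_le_rpow (by positivity) hKQr hε.le
  have hKδ : ((K:ℝ) ^ r) ^ δ ≤ (Q:ℝ) ^ ε := by
    calc ((K:ℝ) ^ r) ^ δ = (((K:ℝ) ^ r) ^ δ) ^ 1 := (pow_one _).symm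
    _ ≤ (((K:ℝ) ^ r) ^ δ) ^ r := by
        apply pow_le_pow_right₀ _ hr
        exact Real.one_le_rpow (one_le_pow₀ hK0) hδ.le
    _ ≤ (Q:ℝ) ^ ε := hKrδ
  -- inner count bound for a fixed pair
  have hinner : ∀ x ∈ T, ∀ y ∈ T,
      ((((Finset.Icc Q (2*Q)).filter fun q =>
          ((∏ i, x i : ℕ) : ZMod q) = ((∏ i, y i : ℕ) : ZMod q)).card : ℝ))
        ≤ if (∏ i, x i) = (∏ i, y i) then (2*Q : ℝ) else C₁ * (Q:ℝ) ^ ε := by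
    intro x hx y hy
    obtain ⟨hx1, hx2⟩ := hTmem x hx
    obtain ⟨hy1, hy2⟩ := hTmem y hy
    set a := ∏ i, x i with ha
    set b := ∏ i, y i with hb
    by_cases hab : a = b
    · rw [if_pos hab]
      have h1 : ((Finset.Icc Q (2*Q)).filter fun q =>
          ((a : ℕ) : ZMod q) = ((b : ℕ) : ZMod q)).card ≤ Q + 1 := by
        calc _ ≤ (Finset.Icc Q (2*Q)).card := card_le_card (filter_subset _ _)
        _ = Q + 1 := by rw [Nat.card_Icc]; omega
      calc (_ : ℝ) ≤ ((Q + 1 : ℕ) : ℝ) := by exact_mod_cast h1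
      _ ≤ 2 * Q := by push_cast; linarith
    · rw [if_neg hab]
      set c := max a b - min a b with hc
      have hc0 : c ≠ 0 := by
        rcases Nat.lt_or_ge a b with h | h <;> omega
      have hcK : c ≤ K ^ r := by omega
      have hsub : ((Finset.Icc Q (2*Q)).filter fun q =>
          ((a : ℕ) : ZMod q) = ((b : ℕ) : ZMod q)) ⊆ c.divisors := by
        intro q hq
        rw [mem_filter] at hq
        obtain ⟨hqI, hqc⟩ := hq
        rw [Nat.mem_divisors]
        refine ⟨?_, hc0⟩
        have hmod : a ≡ b [MOD q] := (ZMod.natCast_eq_natCast_iff _ _ _).mp hqc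
        rcases le_total a b with h | h
        · have hd := (Nat.modEq_iff_dvd' h).mp hmod
          rwa [hc, max_eq_right h, min_eq_left h]
        · have hd := (Nat.modEq_iff_dvd' h).mp hmod.symm
          rwa [hc, max_eq_left h, min_eq_right h]
      calc ((((Finset.Icc Q (2*Q)).filter fun q =>
              ((a : ℕ) : ZMod q) = ((b : ℕ) : ZMod q)).card : ℕ) : ℝ)
          ≤ (c.divisors.card : ℝ) := by exact_mod_cast card_le_card hsub
      _ ≤ C₁ * (c : ℝ) ^ δ := hdiv c hc0
      _ ≤ C₁ * ((K:ℝ) ^ r) ^ δ := by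
          apply mul_le_mul_of_nonneg_left _ hC₁0.le
          apply Real.rpow_le_rpow (Nat.cast_nonneg c) _ hδ.le
          exact_mod_cast hcK
      _ ≤ C₁ * (Q:ℝ) ^ ε := mul_le_mul_of_nonneg_left hKδ hC₁0.le
  -- fiber bound: number of y ∈ T with a given product
  have hfiber : ∀ x ∈ T,
      ((T.filter fun y => (∏ i, x i) = (∏ i, y i)).card : ℝ) ≤ C₁ ^ r * (Q:ℝ) ^ ε := by
    intro x hx
    obtain ⟨hx1, hx2⟩ := hTmem x hx
    set m := ∏ i, x i with hm
    have hm0 : m ≠ 0 := by omega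
    have hsub : (T.filter fun y => m = ∏ i, y i) ⊆
        Fintype.piFinset fun _ : Fin r => m.divisors := by
      intro y hy
      rw [mem_filter] at hy
      rw [Fintype.mem_piFinset]
      intro i
      rw [Nat.mem_divisors]
      exact ⟨hy.2 ▸ Finset.dvd_prod_of_mem y (mem_univ i), hm0⟩
    have h1 : (T.filter fun y => m = ∏ i, y i).card ≤ m.divisors.card ^ r := by
      calc _ ≤ (Fintype.piFinset fun _ : Fin r => m.divisors).card := card_le_card hsub
      _ = m.divisors.card ^ r := by
          rw [Fintype.card_piFinset]
          rw [Finset.prod_const, card_univ, Fintype.card_fin]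
    calc ((T.filter fun y => m = ∏ i, y i).card : ℝ) ≤ ((m.divisors.card : ℝ)) ^ r := by
          exact_mod_cast h1
    _ ≤ (C₁ * (m : ℝ) ^ δ) ^ r := by
        apply pow_le_pow_left₀ (Nat.cast_nonneg _) (hdiv m hm0)
    _ = C₁ ^ r * ((m : ℝ) ^ δ) ^ r := mul_pow _ _ _
    _ ≤ C₁ ^ r * (((K:ℝ) ^ r) ^ δ) ^ r := by
        apply mul_le_mul_of_nonneg_left _ (by positivity)
        apply pow_le_pow_left₀ (by positivity)
        apply Real.rpow_le_rpow (Nat.cast_nonneg m) _ hδ.le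
        exact_mod_cast hx2
    _ ≤ C₁ ^ r * (Q:ℝ) ^ ε := mul_le_mul_of_nonneg_left hKrδ (by positivity)
  -- swap the sums
  have hswap : ∑ q ∈ Finset.Icc Q (2*Q), (productCongCount r q K : ℝ)
      = ∑ p ∈ T ×ˢ T, ((((Finset.Icc Q (2*Q)).filter fun q =>
          ((∏ i, p.1 i : ℕ) : ZMod q) = ((∏ i, p.2 i : ℕ) : ZMod q)).card : ℝ)) := by
    simp_rw [hcount, card_filter]
    push_cast
    rw [Finset.sum_comm]
  -- bound the double sum
  set E := (T ×ˢ T).filter (fun p => (∏ i, p.1 i) = (∏ i, p.2 i)) with hE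
  have hEcard : (E.card : ℝ) ≤ (K:ℝ) ^ r * (C₁ ^ r * (Q:ℝ) ^ ε) := by
    have h1 : E.card = ∑ x ∈ T, (T.filter fun y => (∏ i, x i) = (∏ i, y i)).card := by
      rw [hE, card_filter, Finset.sum_product]
      simp_rw [card_filter]
    rw [h1]
    push_cast
    calc ∑ x ∈ T, ((T.filter fun y => (∏ i, x i) = (∏ i, y i)).card : ℝ)
        ≤ ∑ _x ∈ T, C₁ ^ r * (Q:ℝ) ^ ε := Finset.sum_le_sum hfiber
    _ = (T.card : ℝ) * (C₁ ^ r * (Q:ℝ) ^ ε) := by rw [Finset.sum_const, nsmul_eq_mul]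
    _ = (K:ℝ) ^ r * (C₁ ^ r * (Q:ℝ) ^ ε) := by rw [hcardT]; push_cast; ring
  have hNcard : ((((T ×ˢ T).filter
      (fun p => ¬ (∏ i, p.1 i) = (∏ i, p.2 i))).card : ℕ) : ℝ) ≤ (K:ℝ) ^ (2*r) := by
    calc _ ≤ (((T ×ˢ T).card : ℕ) : ℝ) := by exact_mod_cast card_le_card (filter_subset _ _)
    _ = (K:ℝ) ^ (2*r) := by
        rw [card_product, hcardT]
        push_cast
        rw [two_mul, pow_add]
  have hS : ∑ q ∈ Finset.Icc Q (2*Q), (productCongCount r q K : ℝ)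
      ≤ 2*(Q:ℝ) * ((K:ℝ) ^ r * (C₁ ^ r * (Q:ℝ) ^ ε)) + (K:ℝ) ^ (2*r) * (C₁ * (Q:ℝ) ^ ε) := by
    rw [hswap]
    calc ∑ p ∈ T ×ˢ T, ((((Finset.Icc Q (2*Q)).filter fun q =>
            ((∏ i, p.1 i : ℕ) : ZMod q) = ((∏ i, p.2 i : ℕ) : ZMod q)).card : ℝ))
        ≤ ∑ p ∈ T ×ˢ T, (if (∏ i, p.1 i) = (∏ i, p.2 i) then (2*Q : ℝ) else C₁ * (Q:ℝ) ^ ε) := by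
          apply Finset.sum_le_sum
          intro p hp
          exact hinner p.1 (mem_product.mp hp).1 p.2 (mem_product.mp hp).2
    _ = (E.card : ℝ) * (2*Q) + (((T ×ˢ T).filter
          (fun p => ¬ (∏ i, p.1 i) = (∏ i, p.2 i))).card : ℝ) * (C₁ * (Q:ℝ) ^ ε) := by
        rw [Finset.sum_ite, Finset.sum_const, Finset.sum_const, nsmul_eq_mul, nsmul_eq_mul, hE]
    _ ≤ ((K:ℝ) ^ r * (C₁ ^ r * (Q:ℝ) ^ ε)) * (2*Q) + (K:ℝ) ^ (2*r) * (C₁ * (Q:ℝ) ^ ε) := by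
        apply add_le_add
        · exact mul_le_mul_of_nonneg_right hEcard (by positivity)
        · exact mul_le_mul_of_nonneg_right hNcard (by positivity)
    _ = 2*(Q:ℝ) * ((K:ℝ) ^ r * (C₁ ^ r * (Q:ℝ) ^ ε)) + (K:ℝ) ^ (2*r) * (C₁ * (Q:ℝ) ^ ε) := by
        ring
  have hQne : (Q:ℝ) ≠ 0 := hQ0.ne'
  have hfin : (1 / (Q:ℝ)) * (2*(Q:ℝ) * ((K:ℝ) ^ r * (C₁ ^ r * (Q:ℝ) ^ ε))
        + (K:ℝ) ^ (2*r) * (C₁ * (Q:ℝ) ^ ε))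
      ≤ 2 * C₁ ^ r * ((K : ℝ) ^ (2 * r) * (Q : ℝ)⁻¹ + (K : ℝ) ^ r) * (Q : ℝ) ^ ε := by
    have e1 : (1 / (Q:ℝ)) * (2*(Q:ℝ) * ((K:ℝ) ^ r * (C₁ ^ r * (Q:ℝ) ^ ε))
          + (K:ℝ) ^ (2*r) * (C₁ * (Q:ℝ) ^ ε))
        = 2 * C₁ ^ r * (K:ℝ) ^ r * (Q:ℝ) ^ ε
          + C₁ * ((K:ℝ) ^ (2*r) * (Q:ℝ)⁻¹ * (Q:ℝ) ^ ε) := by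
      field_simp
    rw [e1]
    have hC : C₁ ≤ 2 * C₁ ^ r := by
      have := le_self_pow₀ hC₁ (by omega : r ≠ 0)
      linarith
    have hX : (0:ℝ) ≤ (K:ℝ) ^ (2*r) * (Q:ℝ)⁻¹ * (Q:ℝ) ^ ε := by positivity
    nlinarith [mul_le_mul_of_nonneg_right hC hX]
  calc (1 / (Q : ℝ)) * ∑ q ∈ Finset.Icc Q (2 * Q), (productCongCount r q K : ℝ)
      ≤ (1 / (Q:ℝ)) * (2*(Q:ℝ) * ((K:ℝ) ^ r * (C₁ ^ r * (Q:ℝ) ^ ε))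
        + (K:ℝ) ^ (2*r) * (C₁ * (Q:ℝ) ^ ε)) := by
        apply mul_le_mul_of_nonneg_left hS (by positivity)
  _ ≤ _ := hfin
end
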